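/- arXiv:1807.06921 — 2 statements merged into one kernel-verified Lean document; each statement's English description precedes it below -/
import Mathlib

section
/- For λ ≥ 2, if m = k−j−1 is odd, the internal nodes of a 2-path L(j,k) can be influenced within λ rounds at total internal cost k−j−2 via the incentive pattern 0(20)* (incentive 0 to the first internal node, then alternating 2,0), provided both endpoints j and k are influenced by round λ−1. -/
open Finset

/-- Path adjacency on ℕ: `u` and `v` are consecutive. -/
def pAdj (u v : ℕ) : Prop := u + 1 = v ∨ v + 1 = u

instance : DecidableRel pAdj := fun u v => by unfold pAdj; infer_instance

/-- Influence process on the node set `S` of a path, thresholds `t`, incentives `p`: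
at round 0 exactly the nodes with `p v = t v` are influenced; afterwards a node is
influenced once the number of already influenced neighbours reaches `t v - p v`. -/
def infl (S : Finset ℕ) (t p : ℕ → ℕ) : ℕ → Finset ℕ
  | 0 => S.filter fun v => p v = t v
  | ℓ + 1 => infl S t p ℓ ∪ S.filter fun v =>
      t v - p v ≤ ((infl S t p ℓ).filter fun u => pAdj u v).card

lemma infl_mono (S : Finset ℕ) (t p : ℕ → ℕ) {a b : ℕ} (h : a ≤ b) :
    infl S t p a ⊆ infl S t p b := by
  induction b with
  | zero => simp [Nat.le_zero.mp h]
  | succ m ih =>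
    rcases Nat.lt_or_ge a (m+1) with h' | h'
    · exact (ih (by omega)).trans (by rw [infl]; exact Finset.subset_union_left)
    · have : a = m + 1 := by omega
      subst this; exact subset_rfl

lemma infl_step {S : Finset ℕ} {t p : ℕ → ℕ} {ℓ v : ℕ} (hv : v ∈ S)
    (h : t v - p v ≤ ((infl S t p ℓ).filter fun u => pAdj u v).card) :
    v ∈ infl S t p (ℓ + 1) := by
  rw [infl]
  exact Finset.mem_union_right _ (Finset.mem_filter.mpr ⟨hv, h⟩)

lemma sum_alt (m : ℕ) : ∑ i ∈ range m, (if (i + 1) % 2 = 0 then 2 else 0) = 2 * (m / 2) := by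
  induction m with
  | zero => simp
  | succ n ih => rw [Finset.sum_range_succ, ih]; split_ifs with h <;> omega

/-- for `lam ≥ 2` and `m = k-j-1` odd, the incentive pattern `0(20)*` on
the internal nodes of a 2-path `L(j,k)` has internal cost `k-j-2` and influences all
internal nodes within `lam` rounds, provided both endpoints `j` and `k` are influenced
by round `lam - 1`. -/
theorem two_path_odd_pattern (n lam j k : ℕ) (t p : ℕ → ℕ)
    (hlam : 2 ≤ lam) (hjk : j + 1 < k) (hkn : k < n)
    (htj : t j = 1) (htk : t k = 1) (htint : ∀ i, j < i → i < k → t i = 2)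
    (hodd : Odd (k - j - 1))
    (hpat : ∀ i, j < i → i < k → p i = if (i - j) % 2 = 0 then 2 else 0)
    (hj : j ∈ infl (range n) t p (lam - 1))
    (hk : k ∈ infl (range n) t p (lam - 1)) :
    (∀ i ∈ Ioo j k, i ∈ infl (range n) t p lam) ∧
    ∑ i ∈ Ioo j k, p i = k - j - 2 := by
  have hm : (k - j - 1) % 2 = 1 := by
    rcases hodd with ⟨c, hc⟩; omega
  have heven : ∀ i, j < i → i < k → (i - j) % 2 = 0 →
      i ∈ infl (range n) t p 0 := by
    intro i h1 h2 h3
    rw [infl, Finset.mem_filter, Finset.mem_range]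
    refine ⟨by omega, ?_⟩
    rw [hpat i h1 h2, htint i h1 h2, if_pos h3]
  constructor
  · intro i hi
    rw [mem_Ioo] at hi
    obtain ⟨h1, h2⟩ := hi
    rcases Nat.even_or_odd (i - j) with he | ho
    · have h3 : (i - j) % 2 = 0 := Nat.even_iff.mp he
      exact infl_mono _ _ _ (Nat.zero_le lam) (heven i h1 h2 h3)
    · have h3 : (i - j) % 2 = 1 := Nat.odd_iff.mp ho
      -- neighbours i-1 and i+1 are influenced by round lam-1
      have ha : (i - 1) ∈ infl (range n) t p (lam - 1) := by
        rcases Nat.eq_or_lt_of_le (Nat.succ_le_of_lt h1) with hij | hij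
        · have : i - 1 = j := by omega
          rwa [this]
        · have h1' : j < i - 1 := by omega
          have h2' : i - 1 < k := by omega
          have h3' : (i - 1 - j) % 2 = 0 := by omega
          exact infl_mono _ _ _ (Nat.zero_le _) (heven _ h1' h2' h3')
      have hb : (i + 1) ∈ infl (range n) t p (lam - 1) := by
        rcases Nat.eq_or_lt_of_le (Nat.succ_le_of_lt h2) with hik | hik
        · have : i + 1 = k := by omega
          rw [this]; exact hk
        · have h1' : j < i + 1 := by omega
          have h2' : i + 1 < k := by omega
          have h3' : (i + 1 - j) % 2 = 0 := by omega
          exact infl_mono _ _ _ (Nat.zero_le _) (heven _ h1' h2' h3')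
      have hcard : 2 ≤ ((infl (range n) t p (lam - 1)).filter
          fun u => pAdj u i).card := by
        have hma : (i - 1) ∈ (infl (range n) t p (lam - 1)).filter
            fun u => pAdj u i := by
          refine Finset.mem_filter.mpr ⟨ha, Or.inl (by omega)⟩
        have hmb : (i + 1) ∈ (infl (range n) t p (lam - 1)).filter
            fun u => pAdj u i := by
          refine Finset.mem_filter.mpr ⟨hb, Or.inr rfl⟩
        have := Finset.one_lt_card.mpr ⟨_, hma, _, hmb, by omega⟩
        omega
      have hstep : i ∈ infl (range n) t p ((lam - 1) + 1) := by
        apply infl_step (Finset.mem_range.mpr (by omega))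
        rw [htint i h1 h2, hpat i h1 h2, if_neg (by omega)]
        exact hcard
      have : (lam - 1) + 1 = lam := by omega
      rwa [this] at hstep
  · have h1 : ∑ i ∈ Ioo j k, p i = ∑ i ∈ Ico (j + 1) k, p i := by
      rw [← Finset.Ico_succ_left_eq_Ioo, Order.succ_eq_add_one]
    rw [h1, Finset.sum_Ico_eq_sum_range]
    have h2 : ∀ x ∈ range (k - (j + 1)), p (j + 1 + x) =
        if (x + 1) % 2 = 0 then 2 else 0 := by
      intro x hx
      rw [Finset.mem_range] at hx
      rw [hpat _ (by omega) (by omega)]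
      congr 2
      omega
    rw [Finset.sum_congr rfl h2, sum_alt]
    omega
end

section
/- For λ ≥ 2, if t(0)=t(1)=...=t(j−1)=1 and L(j,j+3) is a 2-path (so t(j)=t(j+3)=1 and t(j+1)=t(j+2)=2), then OPT(0,n−1) = 1 + min{ OPT_{→1}(0,j) + OPT_{2←}(j+3,n−1), OPT_{→2}(0,j) + OPT_{1←}(j+3,n−1) }. -/
open Finset

/-- `OPT t lam j k`: minimum cost of incentives influencing all of the subpath
`L(j,k)` within `lam` rounds. -/
noncomputable def OPT (t : ℕ → ℕ) (lam j k : ℕ) : ℕ :=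
  sInf {c : ℕ | ∃ p : ℕ → ℕ, (∀ i ∈ Icc j k, p i ≤ t i) ∧
    infl (Icc j k) t p lam = Icc j k ∧ c = ∑ i ∈ Icc j k, p i}

/-- `OPTcon t lam j k ℓ v`: minimum cost of incentives influencing all of the subpath
`L(j,k)` within `lam` rounds, with the additional requirement that the endpoint `v` is
influenced by round `lam - ℓ` (using only influence from within `L(j,k)`). -/
noncomputable def OPTcon (t : ℕ → ℕ) (lam j k ℓ v : ℕ) : ℕ :=
  sInf {c : ℕ | ∃ p : ℕ → ℕ, (∀ i ∈ Icc j k, p i ≤ t i) ∧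
    infl (Icc j k) t p lam = Icc j k ∧ v ∈ infl (Icc j k) t p (lam - ℓ) ∧
    c = ∑ i ∈ Icc j k, p i}

/-- `OPTleft t lam j k`: as `OPT`, but the right endpoint `k` receives one unit of
influence from `k+1`, i.e. its threshold is reduced by one. -/
noncomputable def OPTleft (t : ℕ → ℕ) (lam j k : ℕ) : ℕ :=
  sInf {c : ℕ | ∃ p : ℕ → ℕ,
    (∀ i ∈ Icc j k, p i ≤ Function.update t k (t k - 1) i) ∧
    infl (Icc j k) (Function.update t k (t k - 1)) p lam = Icc j k ∧
    c = ∑ i ∈ Icc j k, p i}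

lemma infl_subset (S : Finset ℕ) (t p : ℕ → ℕ) : ∀ ℓ, infl S t p ℓ ⊆ S
  | 0 => filter_subset _ _
  | ℓ + 1 => union_subset (infl_subset S t p ℓ) (filter_subset _ _)

lemma infl_mono_succ (S : Finset ℕ) (t p : ℕ → ℕ) (ℓ : ℕ) :
    infl S t p ℓ ⊆ infl S t p (ℓ + 1) := subset_union_left

lemma infl_mono_le (S : Finset ℕ) (t p : ℕ → ℕ) {m ℓ : ℕ} (h : m ≤ ℓ) :
    infl S t p m ⊆ infl S t p ℓ := by
  induction ℓ with
  | zero => simpa [Nat.le_zero.mp h]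
  | succ ℓ ih =>
    rcases Nat.lt_or_ge m (ℓ+1) with h' | h'
    · exact (ih (by omega)).trans (infl_mono_succ S t p ℓ)
    · have : m = ℓ + 1 := by omega
      simp [this]

lemma infl_mono_S {S S' : Finset ℕ} (t p : ℕ → ℕ) (h : S ⊆ S') :
    ∀ ℓ, infl S t p ℓ ⊆ infl S' t p ℓ
  | 0 => filter_subset_filter _ h
  | ℓ + 1 => by
    rw [infl, infl]
    apply union_subset_union (infl_mono_S t p h ℓ)
    intro v hv
    rw [mem_filter] at hv ⊢
    refine ⟨h hv.1, le_trans hv.2 (card_le_card (filter_subset_filter _ (infl_mono_S t p h ℓ)))⟩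

lemma infl_congr_p (S : Finset ℕ) (t p q : ℕ → ℕ) (h : ∀ v ∈ S, p v = q v) :
    ∀ ℓ, infl S t p ℓ = infl S t q ℓ
  | 0 => by
    apply filter_congr
    intro v hv
    simp [h v hv]
  | ℓ + 1 => by
    rw [infl, infl, infl_congr_p S t p q h ℓ]
    congr 1
    apply filter_congr
    intro v hv
    simp [h v hv]

lemma infl_full (S : Finset ℕ) (t : ℕ → ℕ) : ∀ ℓ, infl S t t ℓ = S
  | 0 => by simp [infl]
  | ℓ + 1 => by
    rw [infl, infl_full S t ℓ]
    exact union_eq_left.mpr (filter_subset _ _)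
lemma trigger_two (S : Finset ℕ) (t p : ℕ → ℕ) (v : ℕ) (hv : 1 ≤ v)
    (htp : t v - p v = 2) (hne : p v ≠ t v) :
    ∀ ℓ, v ∈ infl S t p ℓ → ∃ m, m < ℓ ∧ v - 1 ∈ infl S t p m ∧ v + 1 ∈ infl S t p m := by
  intro ℓ
  induction ℓ with
  | zero => intro h; exact absurd (mem_filter.mp h).2 hne
  | succ ℓ ih =>
    intro h
    rw [infl] at h
    rcases mem_union.mp h with h | h
    · obtain ⟨m, hm, h1, h2⟩ := ih h
      exact ⟨m, by omega, h1, h2⟩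
    · obtain ⟨hvS, hcard⟩ := mem_filter.mp h
      rw [htp] at hcard
      have hsub : ((infl S t p ℓ).filter fun u => pAdj u v) ⊆ {v - 1, v + 1} := by
        intro u hu
        obtain ⟨-, hadj⟩ := mem_filter.mp hu
        rcases hadj with h' | h' <;> · simp only [mem_insert, mem_singleton]; omega
      have heq : ((infl S t p ℓ).filter fun u => pAdj u v) = {v - 1, v + 1} :=
        eq_of_subset_of_card_le hsub (by rw [card_pair (by omega)]; exact hcard)
      refine ⟨ℓ, by omega, ?_, ?_⟩
      · have : v - 1 ∈ ((infl S t p ℓ).filter fun u => pAdj u v) := by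
          rw [heq]; simp
        exact (mem_filter.mp this).1
      · have : v + 1 ∈ ((infl S t p ℓ).filter fun u => pAdj u v) := by
          rw [heq]; simp
        exact (mem_filter.mp this).1

lemma trigger_one (S : Finset ℕ) (t p : ℕ → ℕ) (v : ℕ) (hv : 1 ≤ v)
    (htp : t v - p v = 1) (hne : p v ≠ t v) :
    ∀ ℓ, v ∈ infl S t p ℓ → ∃ m, m < ℓ ∧ (v - 1 ∈ infl S t p m ∨ v + 1 ∈ infl S t p m) := by
  intro ℓ
  induction ℓ with
  | zero => intro h; exact absurd (mem_filter.mp h).2 hne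
  | succ ℓ ih =>
    intro h
    rw [infl] at h
    rcases mem_union.mp h with h | h
    · obtain ⟨m, hm, h1⟩ := ih h
      exact ⟨m, by omega, h1⟩
    · obtain ⟨hvS, hcard⟩ := mem_filter.mp h
      rw [htp] at hcard
      obtain ⟨u, hu⟩ := card_pos.mp hcard
      obtain ⟨huI, hadj⟩ := mem_filter.mp hu
      refine ⟨ℓ, by omega, ?_⟩
      rcases hadj with h' | h'
      · left; have : v - 1 = u := by omega
        rw [this]; exact huI
      · right; have : v + 1 = u := by omega
        rw [this]; exact huI

lemma chain_descL (S : Finset ℕ) (t p : ℕ → ℕ) (y : ℕ)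
    (hone : t (y + 1) - p (y + 1) = 1) (hne1 : p (y + 1) ≠ t (y + 1))
    (htwo : t (y + 2) - p (y + 2) = 2) (hne2 : p (y + 2) ≠ t (y + 2)) :
    ∀ ℓ, y + 1 ∈ infl S t p ℓ → ∃ m, m < ℓ ∧ y ∈ infl S t p m := by
  intro ℓ
  induction ℓ using Nat.strong_induction_on with
  | _ ℓ ih =>
    intro h
    obtain ⟨m, hm, hc⟩ := trigger_one S t p (y + 1) (by omega) hone hne1 ℓ h
    rcases hc with hc | hc
    · exact ⟨m, hm, by simpa using hc⟩
    · have hc2 : y + 2 ∈ infl S t p m := by simpa using hc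
      obtain ⟨m', hm', h1, _⟩ := trigger_two S t p (y + 2) (by omega) htwo hne2 m hc2
      have h1' : y + 1 ∈ infl S t p m' := by simpa using h1
      obtain ⟨m'', hm'', hy⟩ := ih m' (by omega) h1'
      exact ⟨m'', by omega, hy⟩

lemma chain_descR (S : Finset ℕ) (t p : ℕ → ℕ) (y : ℕ)
    (htwo : t (y + 1) - p (y + 1) = 2) (hne1 : p (y + 1) ≠ t (y + 1))
    (hone : t (y + 2) - p (y + 2) = 1) (hne2 : p (y + 2) ≠ t (y + 2)) :
    ∀ ℓ, y + 2 ∈ infl S t p ℓ → ∃ m, m < ℓ ∧ y + 3 ∈ infl S t p m := by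
  intro ℓ
  induction ℓ using Nat.strong_induction_on with
  | _ ℓ ih =>
    intro h
    obtain ⟨m, hm, hc⟩ := trigger_one S t p (y + 2) (by omega) hone hne2 ℓ h
    rcases hc with hc | hc
    · have hc1 : y + 1 ∈ infl S t p m := by simpa using hc
      obtain ⟨m', hm', _, h2⟩ := trigger_two S t p (y + 1) (by omega) htwo hne1 m hc1
      obtain ⟨m'', hm'', hy⟩ := ih m' (by omega) h2
      exact ⟨m'', by omega, hy⟩
    · exact ⟨m, hm, by simpa using hc⟩

lemma no_zero_zero (S : Finset ℕ) (t p : ℕ → ℕ) (y : ℕ)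
    (h1 : t (y + 1) - p (y + 1) = 2) (hne1 : p (y + 1) ≠ t (y + 1))
    (h2 : t (y + 2) - p (y + 2) = 2) (hne2 : p (y + 2) ≠ t (y + 2)) :
    ∀ ℓ, y + 1 ∉ infl S t p ℓ := by
  intro ℓ
  induction ℓ using Nat.strong_induction_on with
  | _ ℓ ih =>
    intro h
    obtain ⟨m, hm, _, hc⟩ := trigger_two S t p (y + 1) (by omega) h1 hne1 ℓ h
    have hc2 : y + 2 ∈ infl S t p m := by simpa using hc
    obtain ⟨m', hm', hc1, _⟩ := trigger_two S t p (y + 2) (by omega) h2 hne2 m hc2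
    have : y + 1 ∈ infl S t p m' := by simpa using hc1
    exact ih m' (by omega) this

lemma restrict_cut (S A : Finset ℕ) (t p : ℕ → ℕ) (hA : A ⊆ S) (e w : ℕ)
    (hbd : ∀ v ∈ A, ∀ u ∈ S, pAdj u v → u ∉ A → u = w ∧ v = e)
    (Hcut : ∀ ℓ, w ∈ infl S t p ℓ → e ∈ infl S t p ℓ) :
    ∀ ℓ, ∀ v ∈ infl S t p ℓ, v ∈ A → v ∈ infl A t p ℓ := by
  intro ℓ
  induction ℓ with
  | zero =>
    intro v hv hvA
    rw [infl] at hv ⊢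
    exact mem_filter.mpr ⟨hvA, (mem_filter.mp hv).2⟩
  | succ ℓ ih =>
    intro v hv hvA
    rw [infl] at hv
    rcases mem_union.mp hv with hv | hv
    · exact infl_mono_succ A t p ℓ (ih v hv hvA)
    · obtain ⟨hvS, hcard⟩ := mem_filter.mp hv
      by_cases hve : v = e ∧ w ∈ infl S t p ℓ
      · have hev := Hcut ℓ hve.2
        rw [← hve.1] at hev
        exact infl_mono_succ A t p ℓ (ih v hev hvA)
      · have hsub : ((infl S t p ℓ).filter fun u => pAdj u v) ⊆
            ((infl A t p ℓ).filter fun u => pAdj u v) := by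
          intro u hu
          obtain ⟨huI, hadj⟩ := mem_filter.mp hu
          have huA : u ∈ A := by
            by_contra huA
            obtain ⟨rfl, rfl⟩ := hbd v hvA u (infl_subset S t p ℓ huI) hadj huA
            exact hve ⟨rfl, huI⟩
          exact mem_filter.mpr ⟨ih u huI huA, hadj⟩
        rw [infl]
        exact mem_union_right _ (mem_filter.mpr ⟨hvA, le_trans hcard (card_le_card hsub)⟩)

lemma restrict_seed (S A : Finset ℕ) (t p : ℕ → ℕ) (hA : A ⊆ S) (e w : ℕ) (he : e ∈ A)
    (hbd : ∀ v ∈ A, ∀ u ∈ S, pAdj u v → u ∉ A → u = w ∧ v = e)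
    (q : ℕ → ℕ) (hq : ∀ v ∈ A, v ≠ e → q v = p v) (hqe : q e = t e) :
    ∀ ℓ, ∀ v ∈ infl S t p ℓ, v ∈ A → v ∈ infl A t q ℓ := by
  have heA : ∀ ℓ, e ∈ infl A t q ℓ := by
    intro ℓ
    apply infl_mono_le A t q (Nat.zero_le ℓ)
    rw [infl]
    exact mem_filter.mpr ⟨he, hqe⟩
  intro ℓ
  induction ℓ with
  | zero =>
    intro v hv hvA
    by_cases hve : v = e
    · subst hve; exact heA 0
    · rw [infl] at hv ⊢
      exact mem_filter.mpr ⟨hvA, by rw [hq v hvA hve]; exact (mem_filter.mp hv).2⟩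
  | succ ℓ ih =>
    intro v hv hvA
    rw [infl] at hv
    rcases mem_union.mp hv with hv | hv
    · exact infl_mono_succ A t q ℓ (ih v hv hvA)
    · by_cases hve : v = e
      · subst hve; exact heA (ℓ + 1)
      · obtain ⟨hvS, hcard⟩ := mem_filter.mp hv
        have hsub : ((infl S t p ℓ).filter fun u => pAdj u v) ⊆
            ((infl A t q ℓ).filter fun u => pAdj u v) := by
          intro u hu
          obtain ⟨huI, hadj⟩ := mem_filter.mp hu
          have huA : u ∈ A := by
            by_contra huA
            exact hve (hbd v hvA u (infl_subset S t p ℓ huI) hadj huA).2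
          exact mem_filter.mpr ⟨ih u huI huA, hadj⟩
        rw [infl]
        refine mem_union_right _ (mem_filter.mpr ⟨hvA, ?_⟩)
        rw [hq v hvA hve]
        exact le_trans hcard (card_le_card hsub)

lemma sum_split (f : ℕ → ℕ) (n j : ℕ) (hn : 1 ≤ n) (hjn : j + 3 ≤ n - 1) :
    ∑ i ∈ Icc 0 (n-1), f i =
      (∑ i ∈ Icc 0 j, f i) + (f (j+1) + f (j+2)) + ∑ i ∈ Icc (j+3) (n-1), f i := by
  have h1 : Icc 0 (n-1) = Ico 0 n := by rw [← Finset.Ico_add_one_right_eq_Icc]; congr 1; omega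
  have h2 : Icc 0 j = Ico 0 (j+1) := by rw [Finset.Ico_add_one_right_eq_Icc]
  have h3 : Icc (j+3) (n-1) = Ico (j+3) n := by rw [← Finset.Ico_add_one_right_eq_Icc]; congr 1; omega
  rw [h1, h2, h3]
  rw [← Finset.sum_Ico_consecutive f (Nat.zero_le (j+1)) (show j+1 ≤ n by omega)]
  rw [← Finset.sum_Ico_consecutive f (show j+1 ≤ j+3 by omega) (show j+3 ≤ n by omega)]
  have hmid : ∑ i ∈ Ico (j+1) (j+3), f i = f (j+1) + f (j+2) := by
    have he : Ico (j+1) (j+3) = {j+1, j+2} := by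
      ext x; simp only [mem_Ico, mem_insert, mem_singleton]; omega
    rw [he, Finset.sum_pair (by omega)]
  rw [hmid]
  ring

lemma hbd_left (n j : ℕ) :
    ∀ v ∈ Icc 0 j, ∀ u ∈ Icc 0 (n-1), pAdj u v → u ∉ Icc 0 j → u = j+1 ∧ v = j := by
  intro v hv u hu hadj huA
  simp only [mem_Icc] at *
  rcases hadj with h | h <;> omega

lemma hbd_right (n j : ℕ) :
    ∀ v ∈ Icc (j+3) (n-1), ∀ u ∈ Icc 0 (n-1), pAdj u v →
      u ∉ Icc (j+3) (n-1) → u = j+2 ∧ v = j+3 := by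
  intro v hv u hu hadj huA
  simp only [mem_Icc] at *
  rcases hadj with h | h <;> omega

lemma OPT_spec (t : ℕ → ℕ) (lam a b : ℕ) :
    ∃ p : ℕ → ℕ, (∀ i ∈ Icc a b, p i ≤ t i) ∧ infl (Icc a b) t p lam = Icc a b ∧
      OPT t lam a b = ∑ i ∈ Icc a b, p i := by
  have h := Nat.sInf_mem (s := {c : ℕ | ∃ p : ℕ → ℕ, (∀ i ∈ Icc a b, p i ≤ t i) ∧
      infl (Icc a b) t p lam = Icc a b ∧ c = ∑ i ∈ Icc a b, p i})
    ⟨∑ i ∈ Icc a b, t i, t, fun i _ => le_rfl, infl_full _ _ _, rfl⟩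
  obtain ⟨p, h1, h2, h3⟩ := h
  exact ⟨p, h1, h2, h3⟩

lemma OPT_le (t : ℕ → ℕ) (lam a b : ℕ) (p : ℕ → ℕ) (h1 : ∀ i ∈ Icc a b, p i ≤ t i)
    (h2 : infl (Icc a b) t p lam = Icc a b) : OPT t lam a b ≤ ∑ i ∈ Icc a b, p i :=
  Nat.sInf_le ⟨p, h1, h2, rfl⟩

lemma OPTcon_spec (t : ℕ → ℕ) (lam a b ℓ v : ℕ) (hv : v ∈ Icc a b) :
    ∃ p : ℕ → ℕ, (∀ i ∈ Icc a b, p i ≤ t i) ∧ infl (Icc a b) t p lam = Icc a b ∧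
      v ∈ infl (Icc a b) t p (lam - ℓ) ∧ OPTcon t lam a b ℓ v = ∑ i ∈ Icc a b, p i := by
  have h := Nat.sInf_mem (s := {c : ℕ | ∃ p : ℕ → ℕ, (∀ i ∈ Icc a b, p i ≤ t i) ∧
      infl (Icc a b) t p lam = Icc a b ∧ v ∈ infl (Icc a b) t p (lam - ℓ) ∧
      c = ∑ i ∈ Icc a b, p i})
    ⟨∑ i ∈ Icc a b, t i, t, fun i _ => le_rfl, infl_full _ _ _,
      by rw [infl_full]; exact hv, rfl⟩
  obtain ⟨p, h1, h2, h3, h4⟩ := h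
  exact ⟨p, h1, h2, h3, h4⟩

lemma OPTcon_le (t : ℕ → ℕ) (lam a b ℓ v : ℕ) (p : ℕ → ℕ) (h1 : ∀ i ∈ Icc a b, p i ≤ t i)
    (h2 : infl (Icc a b) t p lam = Icc a b) (h3 : v ∈ infl (Icc a b) t p (lam - ℓ)) :
    OPTcon t lam a b ℓ v ≤ ∑ i ∈ Icc a b, p i :=
  Nat.sInf_le ⟨p, h1, h2, h3, rfl⟩

lemma OPTcon_mono (t : ℕ → ℕ) (lam a b v : ℕ) {l1 l2 : ℕ} (h : l1 ≤ l2) (hv : v ∈ Icc a b) :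
    OPTcon t lam a b l1 v ≤ OPTcon t lam a b l2 v := by
  obtain ⟨p, h1, h2, h3, h4⟩ := OPTcon_spec t lam a b l2 v hv
  rw [h4]
  exact OPTcon_le t lam a b l1 v p h1 h2
    (infl_mono_le _ _ _ (Nat.sub_le_sub_left h lam) h3)

lemma combine1 (n lam j : ℕ) (t : ℕ → ℕ) (hlam : 2 ≤ lam) (hjn : j + 3 ≤ n - 1)
    (ht1 : t (j+1) = 2) (ht2 : t (j+2) = 2) :
    OPT t lam 0 (n-1) ≤ 1 + (OPTcon t lam 0 j 1 j + OPTcon t lam (j+3) (n-1) 2 (j+3)) := by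
  obtain ⟨pL, hL1, hL2, hL3, hL4⟩ := OPTcon_spec t lam 0 j 1 j (by simp)
  obtain ⟨pR, hR1, hR2, hR3, hR4⟩ := OPTcon_spec t lam (j+3) (n-1) 2 (j+3)
    (by simp only [mem_Icc]; omega)
  set P : ℕ → ℕ := fun v => if v ≤ j then pL v else if v = j+1 then 0 else
    if v = j+2 then 1 else pR v with hP
  have hPj1 : P (j+1) = 0 := by
    simp only [hP]; rw [if_neg (by omega)]; simp
  have hPj2 : P (j+2) = 1 := by
    simp only [hP]; rw [if_neg (by omega), if_neg (by omega)]; simp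
  have hPL : ∀ v ∈ Icc 0 j, pL v = P v := by
    intro v hv
    simp only [hP]; rw [if_pos (mem_Icc.mp hv).2]
  have hPR : ∀ v ∈ Icc (j+3) (n-1), pR v = P v := by
    intro v hv
    have hv' := mem_Icc.mp hv
    simp only [hP]; rw [if_neg (by omega), if_neg (by omega), if_neg (by omega)]
  have hLsub : ∀ ℓ, infl (Icc 0 j) t pL ℓ ⊆ infl (Icc 0 (n-1)) t P ℓ := by
    intro ℓ
    rw [infl_congr_p (Icc 0 j) t pL P hPL ℓ]
    exact infl_mono_S t P (fun x hx => by simp only [mem_Icc] at *; omega) ℓ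
  have hRsub : ∀ ℓ, infl (Icc (j+3) (n-1)) t pR ℓ ⊆ infl (Icc 0 (n-1)) t P ℓ := by
    intro ℓ
    rw [infl_congr_p (Icc (j+3) (n-1)) t pR P hPR ℓ]
    exact infl_mono_S t P (fun x hx => by simp only [mem_Icc] at *; omega) ℓ
  have hmem2 : j + 2 ∈ infl (Icc 0 (n-1)) t P (lam - 1) := by
    have h3 : j + 3 ∈ infl (Icc 0 (n-1)) t P (lam - 2) := hRsub _ hR3
    have heq : lam - 1 = (lam - 2) + 1 := by omega
    rw [heq, infl]
    apply mem_union_right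
    refine mem_filter.mpr ⟨by simp only [mem_Icc]; omega, ?_⟩
    rw [ht2, hPj2]
    have hss : ({j+3} : Finset ℕ) ⊆
        (infl (Icc 0 (n-1)) t P (lam - 2)).filter fun u => pAdj u (j+2) := by
      rw [singleton_subset_iff]
      exact mem_filter.mpr ⟨h3, Or.inr rfl⟩
    calc 2 - 1 = ({j+3} : Finset ℕ).card := by simp
    _ ≤ _ := card_le_card hss
  have hmem1 : j + 1 ∈ infl (Icc 0 (n-1)) t P lam := by
    have hj : j ∈ infl (Icc 0 (n-1)) t P (lam - 1) := hLsub _ hL3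
    have heq : lam = (lam - 1) + 1 := by omega
    rw [heq, infl]
    apply mem_union_right
    refine mem_filter.mpr ⟨by simp only [mem_Icc]; omega, ?_⟩
    rw [ht1, hPj1]
    have hss : ({j, j+2} : Finset ℕ) ⊆
        (infl (Icc 0 (n-1)) t P (lam - 1)).filter fun u => pAdj u (j+1) := by
      intro x hx
      rcases mem_insert.mp hx with rfl | hx
      · exact mem_filter.mpr ⟨hj, Or.inl rfl⟩
      · rw [mem_singleton] at hx
        subst hx
        exact mem_filter.mpr ⟨hmem2, Or.inr rfl⟩
    calc 2 - 0 = ({j, j+2} : Finset ℕ).card := by rw [card_pair (by omega)]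
    _ ≤ _ := card_le_card hss
  have hfull : infl (Icc 0 (n-1)) t P lam = Icc 0 (n-1) := by
    apply Subset.antisymm (infl_subset _ _ _ _)
    intro v hv
    have hv' := mem_Icc.mp hv
    rcases Nat.lt_or_ge v (j+1) with h | h
    · exact hLsub lam (hL2.symm ▸ mem_Icc.mpr (by omega))
    rcases Nat.lt_or_ge v (j+2) with h2 | h2
    · have : v = j + 1 := by omega
      subst this; exact hmem1
    rcases Nat.lt_or_ge v (j+3) with h3 | h3
    · have : v = j + 2 := by omega
      subst this
      exact infl_mono_le _ _ _ (by omega) hmem2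
    · exact hRsub lam (hR2.symm ▸ mem_Icc.mpr (by omega))
  have hPt : ∀ i ∈ Icc 0 (n-1), P i ≤ t i := by
    intro i hi
    have hi' := mem_Icc.mp hi
    rcases Nat.lt_or_ge i (j+1) with h | h
    · rw [← hPL i (mem_Icc.mpr (by omega))]
      exact hL1 i (mem_Icc.mpr (by omega))
    rcases Nat.lt_or_ge i (j+2) with h2 | h2
    · have : i = j + 1 := by omega
      subst this; rw [hPj1]; omega
    rcases Nat.lt_or_ge i (j+3) with h3 | h3
    · have : i = j + 2 := by omega
      subst this; rw [hPj2, ht2]; omega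
    · rw [← hPR i (mem_Icc.mpr (by omega))]
      exact hR1 i (mem_Icc.mpr (by omega))
  have hcost := OPT_le t lam 0 (n-1) P hPt hfull
  rw [sum_split P n j (by omega) hjn] at hcost
  have e1 : ∑ i ∈ Icc 0 j, P i = ∑ i ∈ Icc 0 j, pL i :=
    Finset.sum_congr rfl (fun x hx => (hPL x hx).symm)
  have e2 : ∑ i ∈ Icc (j+3) (n-1), P i = ∑ i ∈ Icc (j+3) (n-1), pR i :=
    Finset.sum_congr rfl (fun x hx => (hPR x hx).symm)
  rw [e1, e2, ← hL4, ← hR4, hPj1, hPj2] at hcost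
  omega

lemma combine2 (n lam j : ℕ) (t : ℕ → ℕ) (hlam : 2 ≤ lam) (hjn : j + 3 ≤ n - 1)
    (ht1 : t (j+1) = 2) (ht2 : t (j+2) = 2) :
    OPT t lam 0 (n-1) ≤ 1 + (OPTcon t lam 0 j 2 j + OPTcon t lam (j+3) (n-1) 1 (j+3)) := by
  obtain ⟨pL, hL1, hL2, hL3, hL4⟩ := OPTcon_spec t lam 0 j 2 j (by simp)
  obtain ⟨pR, hR1, hR2, hR3, hR4⟩ := OPTcon_spec t lam (j+3) (n-1) 1 (j+3)
    (by simp only [mem_Icc]; omega)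
  set P : ℕ → ℕ := fun v => if v ≤ j then pL v else if v = j+1 then 1 else
    if v = j+2 then 0 else pR v with hP
  have hPj1 : P (j+1) = 1 := by
    simp only [hP]; rw [if_neg (by omega)]; simp
  have hPj2 : P (j+2) = 0 := by
    simp only [hP]; rw [if_neg (by omega), if_neg (by omega)]; simp
  have hPL : ∀ v ∈ Icc 0 j, pL v = P v := by
    intro v hv
    simp only [hP]; rw [if_pos (mem_Icc.mp hv).2]
  have hPR : ∀ v ∈ Icc (j+3) (n-1), pR v = P v := by
    intro v hv
    have hv' := mem_Icc.mp hv
    simp only [hP]; rw [if_neg (by omega), if_neg (by omega), if_neg (by omega)]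
  have hLsub : ∀ ℓ, infl (Icc 0 j) t pL ℓ ⊆ infl (Icc 0 (n-1)) t P ℓ := by
    intro ℓ
    rw [infl_congr_p (Icc 0 j) t pL P hPL ℓ]
    exact infl_mono_S t P (fun x hx => by simp only [mem_Icc] at *; omega) ℓ
  have hRsub : ∀ ℓ, infl (Icc (j+3) (n-1)) t pR ℓ ⊆ infl (Icc 0 (n-1)) t P ℓ := by
    intro ℓ
    rw [infl_congr_p (Icc (j+3) (n-1)) t pR P hPR ℓ]
    exact infl_mono_S t P (fun x hx => by simp only [mem_Icc] at *; omega) ℓ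
  have hmem1 : j + 1 ∈ infl (Icc 0 (n-1)) t P (lam - 1) := by
    have hj : j ∈ infl (Icc 0 (n-1)) t P (lam - 2) := hLsub _ hL3
    have heq : lam - 1 = (lam - 2) + 1 := by omega
    rw [heq, infl]
    apply mem_union_right
    refine mem_filter.mpr ⟨by simp only [mem_Icc]; omega, ?_⟩
    rw [ht1, hPj1]
    have hss : ({j} : Finset ℕ) ⊆
        (infl (Icc 0 (n-1)) t P (lam - 2)).filter fun u => pAdj u (j+1) := by
      rw [singleton_subset_iff]
      exact mem_filter.mpr ⟨hj, Or.inl rfl⟩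
    calc 2 - 1 = ({j} : Finset ℕ).card := by simp
    _ ≤ _ := card_le_card hss
  have hmem2 : j + 2 ∈ infl (Icc 0 (n-1)) t P lam := by
    have h3 : j + 3 ∈ infl (Icc 0 (n-1)) t P (lam - 1) := hRsub _ hR3
    have heq : lam = (lam - 1) + 1 := by omega
    rw [heq, infl]
    apply mem_union_right
    refine mem_filter.mpr ⟨by simp only [mem_Icc]; omega, ?_⟩
    rw [ht2, hPj2]
    have hss : ({j+1, j+3} : Finset ℕ) ⊆
        (infl (Icc 0 (n-1)) t P (lam - 1)).filter fun u => pAdj u (j+2) := by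
      intro x hx
      rcases mem_insert.mp hx with rfl | hx
      · exact mem_filter.mpr ⟨hmem1, Or.inl rfl⟩
      · rw [mem_singleton] at hx
        subst hx
        exact mem_filter.mpr ⟨h3, Or.inr rfl⟩
    calc 2 - 0 = ({j+1, j+3} : Finset ℕ).card := by rw [card_pair (by omega)]
    _ ≤ _ := card_le_card hss
  have hfull : infl (Icc 0 (n-1)) t P lam = Icc 0 (n-1) := by
    apply Subset.antisymm (infl_subset _ _ _ _)
    intro v hv
    have hv' := mem_Icc.mp hv
    rcases Nat.lt_or_ge v (j+1) with h | h
    · exact hLsub lam (hL2.symm ▸ mem_Icc.mpr (by omega))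
    rcases Nat.lt_or_ge v (j+2) with h2 | h2
    · have : v = j + 1 := by omega
      subst this
      exact infl_mono_le _ _ _ (by omega) hmem1
    rcases Nat.lt_or_ge v (j+3) with h3 | h3
    · have : v = j + 2 := by omega
      subst this; exact hmem2
    · exact hRsub lam (hR2.symm ▸ mem_Icc.mpr (by omega))
  have hPt : ∀ i ∈ Icc 0 (n-1), P i ≤ t i := by
    intro i hi
    have hi' := mem_Icc.mp hi
    rcases Nat.lt_or_ge i (j+1) with h | h
    · rw [← hPL i (mem_Icc.mpr (by omega))]
      exact hL1 i (mem_Icc.mpr (by omega))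
    rcases Nat.lt_or_ge i (j+2) with h2 | h2
    · have : i = j + 1 := by omega
      subst this; rw [hPj1, ht1]; omega
    rcases Nat.lt_or_ge i (j+3) with h3 | h3
    · have : i = j + 2 := by omega
      subst this; rw [hPj2]; omega
    · rw [← hPR i (mem_Icc.mpr (by omega))]
      exact hR1 i (mem_Icc.mpr (by omega))
  have hcost := OPT_le t lam 0 (n-1) P hPt hfull
  rw [sum_split P n j (by omega) hjn] at hcost
  have e1 : ∑ i ∈ Icc 0 j, P i = ∑ i ∈ Icc 0 j, pL i :=
    Finset.sum_congr rfl (fun x hx => (hPL x hx).symm)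
  have e2 : ∑ i ∈ Icc (j+3) (n-1), P i = ∑ i ∈ Icc (j+3) (n-1), pR i :=
    Finset.sum_congr rfl (fun x hx => (hPR x hx).symm)
  rw [e1, e2, ← hL4, ← hR4, hPj1, hPj2] at hcost
  omega

lemma lower_bound (n lam j : ℕ) (t : ℕ → ℕ) (hlam : 2 ≤ lam) (hjn : j + 3 ≤ n - 1)
    (htj : t j = 1) (ht1 : t (j+1) = 2) (ht2 : t (j+2) = 2) (ht3 : t (j+3) = 1) :
    1 + min (OPTcon t lam 0 j 1 j + OPTcon t lam (j+3) (n-1) 2 (j+3))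
            (OPTcon t lam 0 j 2 j + OPTcon t lam (j+3) (n-1) 1 (j+3)) ≤ OPT t lam 0 (n-1) := by
  obtain ⟨p, hp, hfull, hsum⟩ := OPT_spec t lam 0 (n-1)
  have hmemS : ∀ v, v ≤ n - 1 → v ∈ infl (Icc 0 (n-1)) t p lam := by
    intro v hv; rw [hfull]; exact mem_Icc.mpr ⟨Nat.zero_le v, hv⟩
  have hLsubS : Icc 0 j ⊆ Icc 0 (n-1) := fun x hx => by
    simp only [mem_Icc] at *; omega
  have hRsubS : Icc (j+3) (n-1) ⊆ Icc 0 (n-1) := fun x hx => by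
    simp only [mem_Icc] at *; omega
  have hpL : ∀ i ∈ Icc 0 j, p i ≤ t i := fun i hi => hp i (hLsubS hi)
  have hpR : ∀ i ∈ Icc (j+3) (n-1), p i ≤ t i := fun i hi => hp i (hRsubS hi)
  have ha2 : p (j+1) ≤ 2 := by
    have := hp (j+1) (mem_Icc.mpr ⟨Nat.zero_le _, by omega⟩); omega
  have hb2 : p (j+2) ≤ 2 := by
    have := hp (j+2) (mem_Icc.mpr ⟨Nat.zero_le _, by omega⟩); omega
  -- helper bounds
  have leftCut : ∀ d, (∀ ℓ, j+1 ∈ infl (Icc 0 (n-1)) t p ℓ → j ∈ infl (Icc 0 (n-1)) t p ℓ) →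
      j ∈ infl (Icc 0 (n-1)) t p (lam - d) →
      OPTcon t lam 0 j d j ≤ ∑ i ∈ Icc 0 j, p i := by
    intro d Hcut hjd
    have hres := restrict_cut (Icc 0 (n-1)) (Icc 0 j) t p hLsubS j (j+1) (hbd_left n j) Hcut
    have hfullL : infl (Icc 0 j) t p lam = Icc 0 j := by
      apply Subset.antisymm (infl_subset _ _ _ _)
      intro v hv
      exact hres lam v (hmemS v (by have := mem_Icc.mp hv; omega)) hv
    exact OPTcon_le t lam 0 j d j p hpL hfullL (hres _ j hjd (by simp))
  have rightCut : ∀ d,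
      (∀ ℓ, j+2 ∈ infl (Icc 0 (n-1)) t p ℓ → j+3 ∈ infl (Icc 0 (n-1)) t p ℓ) →
      j+3 ∈ infl (Icc 0 (n-1)) t p (lam - d) →
      OPTcon t lam (j+3) (n-1) d (j+3) ≤ ∑ i ∈ Icc (j+3) (n-1), p i := by
    intro d Hcut hjd
    have hres := restrict_cut (Icc 0 (n-1)) (Icc (j+3) (n-1)) t p hRsubS (j+3) (j+2)
      (hbd_right n j) Hcut
    have hfullR : infl (Icc (j+3) (n-1)) t p lam = Icc (j+3) (n-1) := by
      apply Subset.antisymm (infl_subset _ _ _ _)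
      intro v hv
      exact hres lam v (hmemS v (by have := mem_Icc.mp hv; omega)) hv
    exact OPTcon_le t lam (j+3) (n-1) d (j+3) p hpR hfullR
      (hres _ (j+3) hjd (mem_Icc.mpr ⟨le_rfl, hjn⟩))
  have leftSeed : OPTcon t lam 0 j 2 j ≤ (∑ i ∈ Icc 0 j, p i) + 1 := by
    have hres := restrict_seed (Icc 0 (n-1)) (Icc 0 j) t p hLsubS j (j+1) (by simp)
      (hbd_left n j) (Function.update p j (t j))
      (fun v _ hv => Function.update_of_ne hv _ _) (Function.update_self _ _ _)
    have hfullL : infl (Icc 0 j) t (Function.update p j (t j)) lam = Icc 0 j := by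
      apply Subset.antisymm (infl_subset _ _ _ _)
      intro v hv
      exact hres lam v (hmemS v (by have := mem_Icc.mp hv; omega)) hv
    have hjq : j ∈ infl (Icc 0 j) t (Function.update p j (t j)) (lam - 2) := by
      apply infl_mono_le _ _ _ (Nat.zero_le _)
      rw [infl]
      exact mem_filter.mpr ⟨by simp, Function.update_self _ _ _⟩
    have hqt : ∀ i ∈ Icc 0 j, Function.update p j (t j) i ≤ t i := by
      intro i hi
      by_cases h : i = j
      · subst h; rw [Function.update_self]
      · rw [Function.update_of_ne h]; exact hpL i hi
    have hle := OPTcon_le t lam 0 j 2 j _ hqt hfullL hjq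
    have hsumq : ∑ i ∈ Icc 0 j, Function.update p j (t j) i
        = t j + ∑ i ∈ Icc 0 j \ {j}, p i :=
      Finset.sum_update_of_mem (by simp) _ _
    have hsump : ∑ i ∈ Icc 0 j, p i = (∑ i ∈ Icc 0 j \ {j}, p i) + p j :=
      Finset.sum_eq_sum_sdiff_singleton_add (by simp) _
    rw [hsumq, htj] at hle
    omega
  have rightSeed : ∀ d, OPTcon t lam (j+3) (n-1) d (j+3) ≤ (∑ i ∈ Icc (j+3) (n-1), p i) + 1 := by
    intro d
    have hj3 : j + 3 ∈ Icc (j+3) (n-1) := mem_Icc.mpr ⟨le_rfl, hjn⟩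
    have hres := restrict_seed (Icc 0 (n-1)) (Icc (j+3) (n-1)) t p hRsubS (j+3) (j+2) hj3
      (hbd_right n j) (Function.update p (j+3) (t (j+3)))
      (fun v _ hv => Function.update_of_ne hv _ _) (Function.update_self _ _ _)
    have hfullR : infl (Icc (j+3) (n-1)) t (Function.update p (j+3) (t (j+3))) lam
        = Icc (j+3) (n-1) := by
      apply Subset.antisymm (infl_subset _ _ _ _)
      intro v hv
      exact hres lam v (hmemS v (by have := mem_Icc.mp hv; omega)) hv
    have hjq : j + 3 ∈ infl (Icc (j+3) (n-1)) t (Function.update p (j+3) (t (j+3))) (lam - d) := by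
      apply infl_mono_le _ _ _ (Nat.zero_le _)
      rw [infl]
      exact mem_filter.mpr ⟨hj3, Function.update_self _ _ _⟩
    have hqt : ∀ i ∈ Icc (j+3) (n-1), Function.update p (j+3) (t (j+3)) i ≤ t i := by
      intro i hi
      by_cases h : i = j + 3
      · subst h; rw [Function.update_self]
      · rw [Function.update_of_ne h]; exact hpR i hi
    have hle := OPTcon_le t lam (j+3) (n-1) d (j+3) _ hqt hfullR hjq
    have hsumq : ∑ i ∈ Icc (j+3) (n-1), Function.update p (j+3) (t (j+3)) i
        = t (j+3) + ∑ i ∈ Icc (j+3) (n-1) \ {j+3}, p i :=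
      Finset.sum_update_of_mem hj3 _ _
    have hsump : ∑ i ∈ Icc (j+3) (n-1), p i = (∑ i ∈ Icc (j+3) (n-1) \ {j+3}, p i) + p (j+3) :=
      Finset.sum_eq_sum_sdiff_singleton_add hj3 _
    rw [hsumq, ht3] at hle
    omega
  have hminA := min_le_left (OPTcon t lam 0 j 1 j + OPTcon t lam (j+3) (n-1) 2 (j+3))
    (OPTcon t lam 0 j 2 j + OPTcon t lam (j+3) (n-1) 1 (j+3))
  have hminB := min_le_right (OPTcon t lam 0 j 1 j + OPTcon t lam (j+3) (n-1) 2 (j+3))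
    (OPTcon t lam 0 j 2 j + OPTcon t lam (j+3) (n-1) 1 (j+3))
  rw [hsum, sum_split p n j (by omega) hjn]
  -- case analysis on p (j+1), p (j+2)
  rcases (show p (j+1) = 0 ∨ p (j+1) = 1 ∨ p (j+1) = 2 by omega) with ha | ha | ha <;>
    rcases (show p (j+2) = 0 ∨ p (j+2) = 1 ∨ p (j+2) = 2 by omega) with hb | hb | hb
  -- (0,0): impossible
  · exfalso
    exact no_zero_zero (Icc 0 (n-1)) t p j (by omega) (by omega) (by omega) (by omega) lam
      (hmemS (j+1) (by omega))
  -- (0,1)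
  · have HL : ∀ ℓ, j+1 ∈ infl (Icc 0 (n-1)) t p ℓ → j ∈ infl (Icc 0 (n-1)) t p ℓ := by
      intro ℓ h
      obtain ⟨m, hm, h1, _⟩ := trigger_two _ t p (j+1) (by omega) (by omega) (by omega) ℓ h
      have h1' : j ∈ infl (Icc 0 (n-1)) t p m := by simpa using h1
      exact infl_mono_le _ _ _ (show m ≤ ℓ by omega) h1'
    obtain ⟨m, hm, hjm, h2m⟩ := trigger_two _ t p (j+1) (by omega) (by omega) (by omega) lam
      (hmemS _ (by omega))
    have hjm' : j ∈ infl (Icc 0 (n-1)) t p m := by simpa using hjm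
    have hA := leftCut 1 HL (infl_mono_le _ _ _ (show m ≤ lam - 1 by omega) hjm')
    have HR : ∀ ℓ, j+2 ∈ infl (Icc 0 (n-1)) t p ℓ → j+3 ∈ infl (Icc 0 (n-1)) t p ℓ := by
      intro ℓ h
      obtain ⟨m', hm', h3⟩ := chain_descR _ t p j (by omega) (by omega) (by omega) (by omega) ℓ h
      exact infl_mono_le _ _ _ (show m' ≤ ℓ by omega) h3
    obtain ⟨m', hm', h3'⟩ := chain_descR _ t p j (by omega) (by omega) (by omega) (by omega) m h2m
    have hB := rightCut 2 HR (infl_mono_le _ _ _ (show m' ≤ lam - 2 by omega) h3')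
    omega
  -- (0,2)
  · have HL : ∀ ℓ, j+1 ∈ infl (Icc 0 (n-1)) t p ℓ → j ∈ infl (Icc 0 (n-1)) t p ℓ := by
      intro ℓ h
      obtain ⟨m, hm, h1, _⟩ := trigger_two _ t p (j+1) (by omega) (by omega) (by omega) ℓ h
      have h1' : j ∈ infl (Icc 0 (n-1)) t p m := by simpa using h1
      exact infl_mono_le _ _ _ (show m ≤ ℓ by omega) h1'
    obtain ⟨m, hm, hjm, _⟩ := trigger_two _ t p (j+1) (by omega) (by omega) (by omega) lam
      (hmemS _ (by omega))
    have hjm' : j ∈ infl (Icc 0 (n-1)) t p m := by simpa using hjm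
    have hA := leftCut 1 HL (infl_mono_le _ _ _ (show m ≤ lam - 1 by omega) hjm')
    have hB := rightSeed 2
    omega
  -- (1,0)
  · have HL : ∀ ℓ, j+1 ∈ infl (Icc 0 (n-1)) t p ℓ → j ∈ infl (Icc 0 (n-1)) t p ℓ := by
      intro ℓ h
      obtain ⟨m, hm, h1⟩ := chain_descL _ t p j (by omega) (by omega) (by omega) (by omega) ℓ h
      exact infl_mono_le _ _ _ (show m ≤ ℓ by omega) h1
    have HR : ∀ ℓ, j+2 ∈ infl (Icc 0 (n-1)) t p ℓ → j+3 ∈ infl (Icc 0 (n-1)) t p ℓ := by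
      intro ℓ h
      obtain ⟨m, hm, _, h3⟩ := trigger_two _ t p (j+2) (by omega) (by omega) (by omega) ℓ h
      exact infl_mono_le _ _ _ (show m ≤ ℓ by omega) h3
    obtain ⟨m, hm, h1m, h3m⟩ := trigger_two _ t p (j+2) (by omega) (by omega) (by omega) lam
      (hmemS _ (by omega))
    have hB := rightCut 1 HR (infl_mono_le _ _ _ (show m ≤ lam - 1 by omega) h3m)
    have h1m' : j + 1 ∈ infl (Icc 0 (n-1)) t p m := by simpa using h1m
    obtain ⟨m', hm', hjm'⟩ := chain_descL _ t p j (by omega) (by omega) (by omega) (by omega) m h1m'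
    have hA := leftCut 2 HL (infl_mono_le _ _ _ (show m' ≤ lam - 2 by omega) hjm')
    omega
  -- (1,1)
  · have hex1 : ∃ ℓ, j+1 ∈ infl (Icc 0 (n-1)) t p ℓ := ⟨lam, hmemS _ (by omega)⟩
    have hex2 : ∃ ℓ, j+2 ∈ infl (Icc 0 (n-1)) t p ℓ := ⟨lam, hmemS _ (by omega)⟩
    rcases le_total (Nat.find hex1) (Nat.find hex2) with hle | hle
    · obtain ⟨m, hm, hc⟩ := trigger_one _ t p (j+1) (by omega) (by omega) (by omega) _
        (Nat.find_spec hex1)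
      have hjm : j ∈ infl (Icc 0 (n-1)) t p m := by
        rcases hc with h | h
        · simpa using h
        · exact absurd (Nat.find_min' hex2 (by simpa using h)) (by omega)
      have HL : ∀ ℓ, j+1 ∈ infl (Icc 0 (n-1)) t p ℓ → j ∈ infl (Icc 0 (n-1)) t p ℓ := by
        intro ℓ h
        have hr1 : Nat.find hex1 ≤ ℓ := Nat.find_min' hex1 h
        exact infl_mono_le _ _ _ (by omega) hjm
      have hr1lam : Nat.find hex1 ≤ lam := Nat.find_min' hex1 (hmemS _ (by omega))
      have hA := leftCut 1 HL (infl_mono_le _ _ _ (show m ≤ lam - 1 by omega) hjm)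
      have hB := rightSeed 2
      omega
    · obtain ⟨m, hm, hc⟩ := trigger_one _ t p (j+2) (by omega) (by omega) (by omega) _
        (Nat.find_spec hex2)
      have h3m : j + 3 ∈ infl (Icc 0 (n-1)) t p m := by
        rcases hc with h | h
        · exact absurd (Nat.find_min' hex1 (by simpa using h)) (by omega)
        · simpa using h
      have HR : ∀ ℓ, j+2 ∈ infl (Icc 0 (n-1)) t p ℓ → j+3 ∈ infl (Icc 0 (n-1)) t p ℓ := by
        intro ℓ h
        have hr2 : Nat.find hex2 ≤ ℓ := Nat.find_min' hex2 h
        exact infl_mono_le _ _ _ (by omega) h3m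
      have hr2lam : Nat.find hex2 ≤ lam := Nat.find_min' hex2 (hmemS _ (by omega))
      have hB := rightCut 1 HR (infl_mono_le _ _ _ (show m ≤ lam - 1 by omega) h3m)
      have hA := leftSeed
      omega
  -- (1,2)
  · have hA := leftSeed
    have hB := rightSeed 1
    omega
  -- (2,0)
  · have HR : ∀ ℓ, j+2 ∈ infl (Icc 0 (n-1)) t p ℓ → j+3 ∈ infl (Icc 0 (n-1)) t p ℓ := by
      intro ℓ h
      obtain ⟨m, hm, _, h3⟩ := trigger_two _ t p (j+2) (by omega) (by omega) (by omega) ℓ h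
      exact infl_mono_le _ _ _ (show m ≤ ℓ by omega) h3
    obtain ⟨m, hm, _, h3m⟩ := trigger_two _ t p (j+2) (by omega) (by omega) (by omega) lam
      (hmemS _ (by omega))
    have hB := rightCut 1 HR (infl_mono_le _ _ _ (show m ≤ lam - 1 by omega) h3m)
    have hA := leftSeed
    omega
  -- (2,1)
  · have hA := leftSeed
    have hB := rightSeed 1
    omega
  -- (2,2)
  · have hA := leftSeed
    have hB := rightSeed 1
    omega

/-- for `lam ≥ 2`, if `t(0) = ⋯ = t(j-1) = 1` and `L(j,j+3)` is a 2-path,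
then `OPT(0,n-1) = 1 + min{OPT_→1(0,j) + OPT_2←(j+3,n-1), OPT_→2(0,j) + OPT_1←(j+3,n-1)}`. -/
theorem two_path_length_two_decomposition (n lam j : ℕ) (t : ℕ → ℕ)
    (hlam : 2 ≤ lam) (hjn : j + 3 ≤ n - 1) (hn : 1 ≤ n)
    (htr : ∀ v < n, t v = 1 ∨ t v = 2) (htn : t (n - 1) = 1)
    (hpre : ∀ i < j, t i = 1) (htj : t j = 1)
    (ht1 : t (j + 1) = 2) (ht2 : t (j + 2) = 2) (ht3 : t (j + 3) = 1) :
    OPT t lam 0 (n - 1) =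
      1 + min (OPTcon t lam 0 j 1 j + OPTcon t lam (j + 3) (n - 1) 2 (j + 3))
              (OPTcon t lam 0 j 2 j + OPTcon t lam (j + 3) (n - 1) 1 (j + 3)) := by
  apply le_antisymm
  · have h1 := combine1 n lam j t hlam hjn ht1 ht2
    have h2 := combine2 n lam j t hlam hjn ht1 ht2
    rcases min_cases (OPTcon t lam 0 j 1 j + OPTcon t lam (j + 3) (n - 1) 2 (j + 3))
      (OPTcon t lam 0 j 2 j + OPTcon t lam (j + 3) (n - 1) 1 (j + 3)) with ⟨h, _⟩ | ⟨h, _⟩ <;>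
      omega
  · exact lower_bound n lam j t hlam hjn htj ht1 ht2 ht3
end
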